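/- Let c_{r,t} denote the infimum, over all K_t-free graphs G on a finite nonempty vertex set, of the probability that r vertices chosen independently and uniformly at random from V(G) (with repetition allowed) form an independent set (where a multiset of vertices is independent if no two distinct chosen vertices are adjacent). Then for all ℓ, t ≥ 3, the ℓ-color Ramsey number satisfies r(t; ℓ) ≥ c_{t,t}^{-(ℓ-2)/t} · 2^{(t-1)/2}. -/

import Mathlib

open Finset

lemma sawin_card_restrict {α β : Type*} [Fintype α] [DecidableEq α] [Finite β] (T : Finset α)
    (Q : (↥T → β) → Prop) :
    Nat.card {f : α → β // Q (fun x => f x.1)} =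
      Nat.card {g : ↥T → β // Q g} * Nat.card β ^ (Fintype.card α - T.card) := by
  classical
  let E : (α → β) ≃ ((↥T → β) × ({a : α // ¬ a ∈ T} → β)) :=
    (Equiv.arrowCongr (Equiv.sumCompl (· ∈ T)).symm (Equiv.refl β)).trans
      (Equiv.sumArrowEquivProdArrow _ _ _)
  have hE : ∀ f : α → β, (E f).1 = fun x : ↥T => f x.1 := fun f => rfl
  have e2 : {f : α → β // Q (fun x => f x.1)} ≃
      {y : (↥T → β) × ({a : α // ¬ a ∈ T} → β) // Q y.1} :=
    E.subtypeEquiv (fun f => by rw [hE])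
  rw [Nat.card_congr (e2.trans (Equiv.prodSubtypeFstEquivSubtypeProd)), Nat.card_prod,
    Nat.card_fun]
  congr 2
  rw [Nat.card_eq_fintype_card, Fintype.card_subtype_compl, Fintype.card_coe]

lemma sawin_card_fixed {α β : Type*} [Fintype α] [DecidableEq α] [Finite β] (P : Finset α)
    (b : β) :
    Nat.card {f : α → β // ∀ a ∈ P, f a = b} = Nat.card β ^ (Fintype.card α - P.card) := by
  classical
  have h : ∀ f : α → β, (∀ a ∈ P, f a = b) ↔ ((fun x : ↥P => f x.1) = fun _ => b) := by
    intro f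
    constructor
    · intro h; funext x; exact h x.1 x.2
    · intro h a ha; exact congrFun h ⟨a, ha⟩
  rw [Nat.card_congr (Equiv.subtypeEquivRight h), sawin_card_restrict P (fun g => g = fun _ => b)]
  haveI : Unique {g : ↥P → β // g = fun _ => b} := by
    refine ⟨⟨⟨fun _ => b, rfl⟩⟩, ?_⟩
    rintro ⟨g, rfl⟩
    rfl
  rw [Nat.card_unique, one_mul]

lemma sawin_card_indep {m t k : ℕ} (G : SimpleGraph (Fin m)) {V : Type*} [Fintype V]
    [DecidableEq V] (hV : Fintype.card V = t) :
    Nat.card {g : V → Fin k → Fin m // ∀ x y i, ¬ G.Adj (g x i) (g y i)} =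
      Nat.card {f : Fin t → Fin m // ∀ i j, ¬ G.Adj (f i) (f j)} ^ k := by
  classical
  have e1 : {g : V → Fin k → Fin m // ∀ x y i, ¬ G.Adj (g x i) (g y i)} ≃
      {h : Fin k → V → Fin m // ∀ i x y, ¬ G.Adj (h i x) (h i y)} := by
    refine (Equiv.piComm (fun (_ : V) (_ : Fin k) => Fin m)).subtypeEquiv (fun g => ?_)
    constructor
    · intro hg i x y; exact hg x y i
    · intro hg x y i; exact hg i x y
  have e2 : {h : Fin k → V → Fin m // ∀ i x y, ¬ G.Adj (h i x) (h i y)} ≃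
      (Fin k → {u : V → Fin m // ∀ x y, ¬ G.Adj (u x) (u y)}) :=
    Equiv.subtypePiEquivPi (p := fun (_ : Fin k) (u : V → Fin m) => ∀ x y, ¬ G.Adj (u x) (u y))
  have e3 : {u : V → Fin m // ∀ x y, ¬ G.Adj (u x) (u y)} ≃
      {f : Fin t → Fin m // ∀ i j, ¬ G.Adj (f i) (f j)} := by
    refine (Equiv.arrowCongr (Fintype.equivFinOfCardEq hV) (Equiv.refl (Fin m))).subtypeEquiv
      (fun u => ?_)
    constructor
    · intro hu i j; exact hu _ _
    · intro hu x y
      have := hu (Fintype.equivFinOfCardEq hV x) (Fintype.equivFinOfCardEq hV y)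
      simpa using this
  rw [Nat.card_congr (e1.trans e2), Nat.card_fun, Nat.card_congr e3]
  simp

def sawinCol {n m k2 ℓ : ℕ} (hk : k2 + 2 ≤ ℓ) (G : SimpleGraph (Fin m))
    [DecidableRel G.Adj] (φ : Fin n → Fin k2 → Fin m) (χ : Sym2 (Fin n) → Fin 2) :
    Sym2 (Fin n) → Fin ℓ :=
  Sym2.lift ⟨fun x y =>
    if h : (univ.filter (fun i => G.Adj (φ x i) (φ y i))).Nonempty
    then ⟨((univ.filter (fun i => G.Adj (φ x i) (φ y i))).min' h).val + 2,
      by have h2 := ((univ.filter (fun i => G.Adj (φ x i) (φ y i))).min' h).isLt; omega⟩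
    else ⟨(χ s(x, y)).val, by have := (χ s(x, y)).isLt; omega⟩,
    by
      intro x y
      have hst : univ.filter (fun i => G.Adj (φ x i) (φ y i)) =
          univ.filter (fun i => G.Adj (φ y i) (φ x i)) := by
        apply Finset.filter_congr
        intro i _
        rw [SimpleGraph.adj_comm]
      simp only [hst, Sym2.eq_swap]⟩

lemma sawinCol_pos {n m k2 ℓ : ℕ} (hk : k2 + 2 ≤ ℓ) (G : SimpleGraph (Fin m))
    [DecidableRel G.Adj] (φ : Fin n → Fin k2 → Fin m) (χ : Sym2 (Fin n) → Fin 2)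
    {x y : Fin n} (hne : (univ.filter (fun i => G.Adj (φ x i) (φ y i))).Nonempty) :
    (sawinCol hk G φ χ s(x, y)).val =
      ((univ.filter (fun i => G.Adj (φ x i) (φ y i))).min' hne).val + 2 := by
  simp only [sawinCol, Sym2.lift_mk]
  rw [dif_pos hne]

lemma sawinCol_neg {n m k2 ℓ : ℕ} (hk : k2 + 2 ≤ ℓ) (G : SimpleGraph (Fin m))
    [DecidableRel G.Adj] (φ : Fin n → Fin k2 → Fin m) (χ : Sym2 (Fin n) → Fin 2)
    {x y : Fin n} (hne : ¬ (univ.filter (fun i => G.Adj (φ x i) (φ y i))).Nonempty) :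
    (sawinCol hk G φ χ s(x, y)).val = (χ s(x, y)).val := by
  simp only [sawinCol, Sym2.lift_mk]
  rw [dif_neg hne]

lemma sawin_count {ℓ t n m k2 : ℕ} (hℓ : 3 ≤ ℓ) (ht : 3 ≤ t) (hm : 0 < m)
    (hk2 : k2 = ℓ - 2) (G : SimpleGraph (Fin m)) (hG : G.CliqueFree t)
    (hn : ∀ c : Sym2 (Fin n) → Fin ℓ, ∃ i : Fin ℓ, ∃ S : Finset (Fin n),
      S.card = t ∧ ∀ x ∈ S, ∀ y ∈ S, x ≠ y → c s(x, y) = i) :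
    t ≤ n ∧ (m ^ k2) ^ n * 2 ^ (Fintype.card (Sym2 (Fin n))) ≤
      n.choose t * 2 * ((Nat.card {f : Fin t → Fin m // ∀ i j, ¬ G.Adj (f i) (f j)}) ^ k2 *
        (m ^ k2) ^ (n - t) * 2 ^ (Fintype.card (Sym2 (Fin n)) - t.choose 2)) := by
  classical
  haveI : DecidableRel G.Adj := Classical.decRel _
  have hk : k2 + 2 ≤ ℓ := by omega
  have claim : ∀ (φ : Fin n → Fin k2 → Fin m) (χ : Sym2 (Fin n) → Fin 2),
      ∃ (T : Finset (Fin n)) (j : Fin 2), T.card = t ∧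
      (∀ x ∈ T, ∀ y ∈ T, x ≠ y → ∀ i, ¬ G.Adj (φ x i) (φ y i)) ∧
      (∀ p ∈ T.offDiag.image (Function.uncurry Sym2.mk), χ p = j) := by
    intro φ χ
    obtain ⟨i, T, hTcard, hmono⟩ := hn (sawinCol (n := n) hk G φ χ)
    by_cases hi : i.val < 2
    · refine ⟨T, ⟨i.val, hi⟩, hTcard, ?_, ?_⟩
      · intro x hx y hy hxy i'
        have h := congrArg Fin.val (hmono x hx y hy hxy)
        intro hadj
        have hne : (univ.filter (fun i0 => G.Adj (φ x i0) (φ y i0))).Nonempty :=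
          ⟨i', Finset.mem_filter.2 ⟨Finset.mem_univ _, hadj⟩⟩
        rw [sawinCol_pos hk G φ χ hne] at h
        omega
      · intro p hp
        obtain ⟨⟨x, y⟩, hxy, rfl⟩ := Finset.mem_image.1 hp
        rw [Finset.mem_offDiag] at hxy
        have h := congrArg Fin.val (hmono x hxy.1 y hxy.2.1 hxy.2.2)
        by_cases hne : (univ.filter (fun i0 => G.Adj (φ x i0) (φ y i0))).Nonempty
        · rw [sawinCol_pos hk G φ χ hne] at h
          omega
        · rw [sawinCol_neg hk G φ χ hne] at h
          exact Fin.ext h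
    · exfalso
      push_neg at hi
      have hi' : i.val - 2 < k2 := by have := i.isLt; omega
      have hadj : ∀ x ∈ T, ∀ y ∈ T, x ≠ y →
          G.Adj (φ x ⟨i.val - 2, hi'⟩) (φ y ⟨i.val - 2, hi'⟩) := by
        intro x hx y hy hxy
        have h := congrArg Fin.val (hmono x hx y hy hxy)
        by_cases hne : (univ.filter (fun i0 => G.Adj (φ x i0) (φ y i0))).Nonempty
        · rw [sawinCol_pos hk G φ χ hne] at h
          have hmem := Finset.min'_mem _ hne
          have heq : (univ.filter (fun i0 => G.Adj (φ x i0) (φ y i0))).min' hne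
              = (⟨i.val - 2, hi'⟩ : Fin k2) := by
            apply Fin.ext
            simp only
            omega
          rw [heq] at hmem
          exact (Finset.mem_filter.1 hmem).2
        · rw [sawinCol_neg hk G φ χ hne] at h
          have := (χ s(x, y)).isLt
          omega
      apply hG (T.image fun x => φ x ⟨i.val - 2, hi'⟩)
      constructor
      · intro a ha b hb hab
        simp only [Finset.coe_image, Set.mem_image, Finset.mem_coe] at ha hb
        obtain ⟨x, hx, rfl⟩ := ha
        obtain ⟨y, hy, rfl⟩ := hb
        have hxy : x ≠ y := by rintro rfl; exact hab rfl
        exact hadj x hx y hy hxy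
      · rw [Finset.card_image_of_injOn, hTcard]
        intro x hx y hy hfeq
        by_contra hxy
        have hfeq' : φ x ⟨i.val - 2, hi'⟩ = φ y ⟨i.val - 2, hi'⟩ := hfeq
        have hthis := hadj x hx y hy hxy
        rw [hfeq'] at hthis
        exact G.irrefl hthis
  have hnt : t ≤ n := by
    obtain ⟨T, j, hT, -, -⟩ := claim (fun _ _ => ⟨0, hm⟩) (fun _ => 0)
    calc t = T.card := hT.symm
    _ ≤ n := by simpa using Finset.card_le_univ T
  refine ⟨hnt, ?_⟩
  have cardA : ∀ T : Finset (Fin n), T.card = t →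
      (univ.filter (fun φ : Fin n → Fin k2 → Fin m =>
        ∀ x ∈ T, ∀ y ∈ T, x ≠ y → ∀ i, ¬ G.Adj (φ x i) (φ y i))).card
        = (Nat.card {f : Fin t → Fin m // ∀ i j, ¬ G.Adj (f i) (f j)}) ^ k2 *
          (m ^ k2) ^ (n - t) := by
    intro T hT
    rw [← Fintype.card_subtype]
    rw [← Nat.card_eq_fintype_card]
    have hiff : ∀ φ : Fin n → Fin k2 → Fin m,
        (∀ x ∈ T, ∀ y ∈ T, x ≠ y → ∀ i, ¬ G.Adj (φ x i) (φ y i)) ↔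
        (∀ (x y : ↥T) (i : Fin k2), ¬ G.Adj ((fun x : ↥T => φ x.1) x i)
          ((fun x : ↥T => φ x.1) y i)) := by
      intro φ
      constructor
      · intro h x y i
        by_cases hxy : x.1 = y.1
        · simp only [hxy]
          exact fun ha => G.irrefl ha
        · exact h x.1 x.2 y.1 y.2 hxy i
      · intro h x hx y hy hxy i
        exact h ⟨x, hx⟩ ⟨y, hy⟩ i
    rw [Nat.card_congr (Equiv.subtypeEquivRight hiff)]
    rw [sawin_card_restrict T (fun g : ↥T → Fin k2 → Fin m =>
      ∀ (x y : ↥T) (i : Fin k2), ¬ G.Adj (g x i) (g y i))]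
    have hct : Fintype.card ↥T = t := by rw [Fintype.card_coe, hT]
    rw [sawin_card_indep G hct]
    have hcard : Nat.card (Fin k2 → Fin m) = m ^ k2 := by simp [Nat.card_eq_fintype_card]
    rw [hcard, Fintype.card_fin, hT]
  have cardB : ∀ (T : Finset (Fin n)), T.card = t → ∀ j : Fin 2,
      (univ.filter (fun χ : Sym2 (Fin n) → Fin 2 =>
        ∀ p ∈ T.offDiag.image (Function.uncurry Sym2.mk), χ p = j)).card =
        2 ^ (Fintype.card (Sym2 (Fin n)) - t.choose 2) := by
    intro T hT j
    rw [← Fintype.card_subtype, ← Nat.card_eq_fintype_card]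
    rw [sawin_card_fixed (T.offDiag.image (Function.uncurry Sym2.mk)) j]
    rw [Sym2.card_image_offDiag, hT]
    simp [Nat.card_eq_fintype_card]
  have hcardΩ : Fintype.card ((Fin n → Fin k2 → Fin m) × (Sym2 (Fin n) → Fin 2)) =
      (m ^ k2) ^ n * 2 ^ (Fintype.card (Sym2 (Fin n))) := by
    simp
  have hsub : (univ : Finset ((Fin n → Fin k2 → Fin m) × (Sym2 (Fin n) → Fin 2))) ⊆
      ((univ.powersetCard t) ×ˢ (univ : Finset (Fin 2))).biUnion
        (fun Tj => univ.filter (fun ω =>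
          (∀ x ∈ Tj.1, ∀ y ∈ Tj.1, x ≠ y → ∀ i, ¬ G.Adj (ω.1 x i) (ω.1 y i)) ∧
          (∀ p ∈ Tj.1.offDiag.image (Function.uncurry Sym2.mk), ω.2 p = Tj.2))) := by
    intro ω _
    obtain ⟨T, j, hT, hA, hB⟩ := claim ω.1 ω.2
    refine Finset.mem_biUnion.2 ⟨(T, j), ?_, ?_⟩
    · exact Finset.mem_product.2 ⟨Finset.mem_powersetCard_univ.2 hT, Finset.mem_univ _⟩
    · exact Finset.mem_filter.2 ⟨Finset.mem_univ _, hA, hB⟩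
  calc (m ^ k2) ^ n * 2 ^ (Fintype.card (Sym2 (Fin n)))
      = (univ : Finset ((Fin n → Fin k2 → Fin m) × (Sym2 (Fin n) → Fin 2))).card := by
        rw [Finset.card_univ, hcardΩ]
    _ ≤ _ := Finset.card_le_card hsub
    _ ≤ ∑ Tj ∈ (univ.powersetCard t) ×ˢ (univ : Finset (Fin 2)),
          (univ.filter (fun ω : (Fin n → Fin k2 → Fin m) × (Sym2 (Fin n) → Fin 2) =>
            (∀ x ∈ Tj.1, ∀ y ∈ Tj.1, x ≠ y → ∀ i, ¬ G.Adj (ω.1 x i) (ω.1 y i)) ∧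
            (∀ p ∈ Tj.1.offDiag.image (Function.uncurry Sym2.mk), ω.2 p = Tj.2))).card :=
        Finset.card_biUnion_le
    _ ≤ ∑ _Tj ∈ (univ.powersetCard t) ×ˢ (univ : Finset (Fin 2)),
          ((Nat.card {f : Fin t → Fin m // ∀ i j, ¬ G.Adj (f i) (f j)}) ^ k2 *
            (m ^ k2) ^ (n - t) * 2 ^ (Fintype.card (Sym2 (Fin n)) - t.choose 2)) := by
        apply Finset.sum_le_sum
        intro Tj hTj
        have hT : Tj.1.card = t :=
          Finset.mem_powersetCard_univ.1 (Finset.mem_product.1 hTj).1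
        have heq : (univ.filter (fun ω : (Fin n → Fin k2 → Fin m) × (Sym2 (Fin n) → Fin 2) =>
            (∀ x ∈ Tj.1, ∀ y ∈ Tj.1, x ≠ y → ∀ i, ¬ G.Adj (ω.1 x i) (ω.1 y i)) ∧
            (∀ p ∈ Tj.1.offDiag.image (Function.uncurry Sym2.mk), ω.2 p = Tj.2))).card =
            (univ.filter (fun φ : Fin n → Fin k2 → Fin m =>
              ∀ x ∈ Tj.1, ∀ y ∈ Tj.1, x ≠ y → ∀ i, ¬ G.Adj (φ x i) (φ y i))).card *
            (univ.filter (fun χ : Sym2 (Fin n) → Fin 2 =>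
              ∀ p ∈ Tj.1.offDiag.image (Function.uncurry Sym2.mk), χ p = Tj.2)).card := by
          rw [← Finset.univ_product_univ]
          have hset : ((univ : Finset (Fin n → Fin k2 → Fin m)) ×ˢ
              (univ : Finset (Sym2 (Fin n) → Fin 2))).filter
                (fun ω =>
                  (∀ x ∈ Tj.1, ∀ y ∈ Tj.1, x ≠ y → ∀ i, ¬ G.Adj (ω.1 x i) (ω.1 y i)) ∧
                  (∀ p ∈ Tj.1.offDiag.image (Function.uncurry Sym2.mk), ω.2 p = Tj.2)) =
              (univ.filter (fun φ : Fin n → Fin k2 → Fin m =>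
                ∀ x ∈ Tj.1, ∀ y ∈ Tj.1, x ≠ y → ∀ i, ¬ G.Adj (φ x i) (φ y i))) ×ˢ
              (univ.filter (fun χ : Sym2 (Fin n) → Fin 2 =>
                ∀ p ∈ Tj.1.offDiag.image (Function.uncurry Sym2.mk), χ p = Tj.2)) := by
            ext ω
            simp only [Finset.mem_filter, Finset.mem_product, Finset.mem_univ, true_and]
          rw [hset, Finset.card_product]
        rw [heq, cardA Tj.1 hT, cardB Tj.1 hT Tj.2]
    _ = n.choose t * 2 * ((Nat.card {f : Fin t → Fin m // ∀ i j, ¬ G.Adj (f i) (f j)}) ^ k2 *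
          (m ^ k2) ^ (n - t) * 2 ^ (Fintype.card (Sym2 (Fin n)) - t.choose 2)) := by
        rw [Finset.sum_const, Finset.card_product, Finset.card_powersetCard,
          Finset.card_univ, Finset.card_univ, Fintype.card_fin, Fintype.card_fin]
        rw [smul_eq_mul]

lemma sawin_key {ℓ t n m : ℕ} (hℓ : 3 ≤ ℓ) (ht : 3 ≤ t) (hm : 0 < m)
    (G : SimpleGraph (Fin m)) (hG : G.CliqueFree t)
    (hn : ∀ c : Sym2 (Fin n) → Fin ℓ, ∃ i : Fin ℓ, ∃ S : Finset (Fin n),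
      S.card = t ∧ ∀ x ∈ S, ∀ y ∈ S, x ≠ y → c s(x, y) = i) :
    2 ^ t.choose 2 * m ^ ((ℓ - 2) * t) <
      n ^ t * (Nat.card {f : Fin t → Fin m // ∀ i j, ¬ G.Adj (f i) (f j)}) ^ (ℓ - 2) := by
  by_contra hcon
  push_neg at hcon
  obtain ⟨hnt, hΩ⟩ := sawin_count (k2 := ℓ - 2) hℓ ht hm rfl G hG hn
  have hCN : t.choose 2 ≤ Fintype.card (Sym2 (Fin n)) := by
    obtain ⟨T, -, hT⟩ := Finset.exists_subset_card_eq
      (show t ≤ (univ : Finset (Fin n)).card by simpa using hnt)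
    calc t.choose 2 = (T.offDiag.image (Function.uncurry Sym2.mk)).card := by
          rw [Sym2.card_image_offDiag, hT]
    _ ≤ Fintype.card (Sym2 (Fin n)) := by simpa using Finset.card_le_univ _
  set I := Nat.card {f : Fin t → Fin m // ∀ i j, ¬ G.Adj (f i) (f j)} with hI
  clear_value I
  clear hI hn hG
  set k2 := ℓ - 2 with hk2
  set C := t.choose 2 with hC
  set N2 := Fintype.card (Sym2 (Fin n)) with hN2
  clear_value k2 C N2
  clear hk2 hC hN2 G
  have h1 : (m ^ k2) ^ n = (m ^ k2) ^ (n - t) * (m ^ k2) ^ t := by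
    rw [← pow_add]; congr 1; omega
  have h2 : (2 : ℕ) ^ N2 = 2 ^ (N2 - C) * 2 ^ C := by
    rw [← pow_add]; congr 1; omega
  have hpos : 0 < (m ^ k2) ^ (n - t) * 2 ^ (N2 - C) := by positivity
  have hkey2 : (m ^ k2) ^ t * 2 ^ C ≤ n.choose t * 2 * I ^ k2 := by
    apply Nat.le_of_mul_le_mul_left _ hpos
    calc (m ^ k2) ^ (n - t) * 2 ^ (N2 - C) * ((m ^ k2) ^ t * 2 ^ C)
        = (m ^ k2) ^ n * 2 ^ N2 := by rw [h1, h2]; ring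
      _ ≤ n.choose t * 2 * (I ^ k2 * (m ^ k2) ^ (n - t) * 2 ^ (N2 - C)) := hΩ
      _ = (m ^ k2) ^ (n - t) * 2 ^ (N2 - C) * (n.choose t * 2 * I ^ k2) := by ring
  have h6 : 6 ≤ t.factorial := by
    calc (6 : ℕ) = Nat.factorial 3 := rfl
    _ ≤ t.factorial := Nat.factorial_le ht
  have hdesc : n.choose t * t.factorial ≤ n ^ t := by
    rw [mul_comm, ← Nat.descFactorial_eq_factorial_mul_choose]
    exact Nat.descFactorial_le_pow n t
  have hfinal : 3 * ((m ^ k2) ^ t * 2 ^ C) ≤ (m ^ k2) ^ t * 2 ^ C := by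
    calc 3 * ((m ^ k2) ^ t * 2 ^ C) ≤ 3 * (n.choose t * 2 * I ^ k2) :=
          Nat.mul_le_mul_left _ hkey2
      _ = n.choose t * 6 * I ^ k2 := by ring
      _ ≤ n.choose t * t.factorial * I ^ k2 :=
          Nat.mul_le_mul_right _ (Nat.mul_le_mul_left _ h6)
      _ ≤ n ^ t * I ^ k2 := Nat.mul_le_mul_right _ hdesc
      _ ≤ 2 ^ C * m ^ (k2 * t) := hcon
      _ = (m ^ k2) ^ t * 2 ^ C := by rw [← pow_mul]; ring
  have hZ : 0 < (m ^ k2) ^ t * 2 ^ C := by positivity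
  omega

lemma sawin_pairwise_or {α : Type*} {R : α → α → Prop} :
    ∀ {l : List α}, l.Pairwise R → ∀ {x y : α}, x ∈ l → y ∈ l → x ≠ y → R x y ∨ R y x := by
  intro l hl
  induction hl with
  | nil => simp
  | cons h _ ih =>
    intro x y hx hy hxy
    rcases List.mem_cons.1 hx with rfl | hx'
    · rcases List.mem_cons.1 hy with rfl | hy'
      · exact absurd rfl hxy
      · exact Or.inl (h y hy')
    · rcases List.mem_cons.1 hy with rfl | hy'
      · exact Or.inr (h x hx')
      · exact ih hx' hy' hxy

lemma sawin_chain {n ℓ : ℕ} (hℓ2 : 2 ≤ ℓ) (c : Sym2 (Fin n) → Fin ℓ) :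
    ∀ (k : ℕ) (A : Finset (Fin n)), ℓ ^ k ≤ A.card →
    ∃ (l : List (Fin n)) (d : Fin n → Fin ℓ), l.length = k ∧ l.Nodup ∧
      (∀ x ∈ l, x ∈ A) ∧ l.Pairwise (fun x y => c s(x, y) = d x) := by
  intro k
  induction k with
  | zero =>
    intro A _
    exact ⟨[], fun _ => ⟨0, by omega⟩, rfl, List.nodup_nil, by simp, List.Pairwise.nil⟩
  | succ k ih =>
    intro A hA
    have hk1 : 1 ≤ ℓ ^ k := Nat.one_le_pow _ _ (by omega)
    have hkk : ℓ ^ (k + 1) = ℓ * ℓ ^ k := by rw [pow_succ, mul_comm]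
    have hle : ℓ ^ k ≤ ℓ * ℓ ^ k := Nat.le_mul_of_pos_left _ (by omega)
    have hd : ℓ * (ℓ ^ k - 1) + ℓ = ℓ * ℓ ^ k := by
      have hsa : (ℓ ^ k - 1) + 1 = ℓ ^ k := Nat.sub_add_cancel hk1
      calc ℓ * (ℓ ^ k - 1) + ℓ = ℓ * ((ℓ ^ k - 1) + 1) := by ring
        _ = ℓ * ℓ ^ k := by rw [hsa]
    have hAne : A.Nonempty := Finset.card_pos.1 (by omega)
    obtain ⟨v, hv⟩ := hAne
    classical
    have hex : ∃ i : Fin ℓ, ℓ ^ k ≤ ((A.erase v).filter (fun u => c s(v, u) = i)).card := by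
      by_contra hno
      push_neg at hno
      have hcover : (A.erase v) ⊆ (univ : Finset (Fin ℓ)).biUnion
          (fun i => (A.erase v).filter (fun u => c s(v, u) = i)) := by
        intro u hu
        exact Finset.mem_biUnion.2 ⟨_, Finset.mem_univ _, Finset.mem_filter.2 ⟨hu, rfl⟩⟩
      have h1 : A.card - 1 ≤ ℓ * (ℓ ^ k - 1) := by
        calc A.card - 1 = (A.erase v).card := (Finset.card_erase_of_mem hv).symm
          _ ≤ ∑ i : Fin ℓ, ((A.erase v).filter (fun u => c s(v, u) = i)).card :=
            le_trans (Finset.card_le_card hcover) Finset.card_biUnion_le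
          _ ≤ ∑ _i : Fin ℓ, (ℓ ^ k - 1) := Finset.sum_le_sum (fun i _ => by
              have := hno i; omega)
          _ = ℓ * (ℓ ^ k - 1) := by
            rw [Finset.sum_const, Finset.card_univ, Fintype.card_fin, smul_eq_mul]
      omega
    obtain ⟨i, hBi⟩ := hex
    obtain ⟨l', d', hlen, hnd, hsub, hpw⟩ := ih _ hBi
    have hl'er : ∀ x ∈ l', x ∈ A.erase v := fun x hx => Finset.mem_of_mem_filter _ (hsub x hx)
    refine ⟨v :: l', Function.update d' v i, by simp [hlen], ?_, ?_, ?_⟩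
    · rw [List.nodup_cons]
      refine ⟨fun hvl => ?_, hnd⟩
      exact (Finset.notMem_erase v A) (hl'er v hvl)
    · intro x hx
      rcases List.mem_cons.1 hx with rfl | hx'
      · exact hv
      · exact Finset.mem_of_mem_erase (hl'er x hx')
    · rw [List.pairwise_cons]
      constructor
      · intro y hy
        have : c s(v, y) = i := (Finset.mem_filter.1 (hsub y hy)).2
        rw [Function.update_self]
        exact this
      · refine List.Pairwise.imp_of_mem ?_ hpw
        intro a b ha _ h
        have hav : a ≠ v := Finset.ne_of_mem_erase (hl'er a ha)
        rw [Function.update_of_ne hav]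
        exact h

lemma sawin_ramsey_exists (ℓ t : ℕ) (hℓ : 3 ≤ ℓ) (ht : 3 ≤ t) :
    ∀ c : Sym2 (Fin (ℓ ^ (ℓ * (t - 1) + 1))) → Fin ℓ, ∃ i : Fin ℓ,
      ∃ S : Finset (Fin (ℓ ^ (ℓ * (t - 1) + 1))), S.card = t ∧
        ∀ x ∈ S, ∀ y ∈ S, x ≠ y → c s(x, y) = i := by
  intro c
  classical
  obtain ⟨l, d, hlen, hnd, -, hpw⟩ := sawin_chain (by omega) c (ℓ * (t - 1) + 1) univ
    (by simp)
  have hfib : ∃ i : Fin ℓ, t - 1 < (l.toFinset.filter (fun x => d x = i)).card := by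
    have h := Finset.exists_lt_card_fiber_of_mul_lt_card_of_maps_to
      (f := d) (s := l.toFinset) (t := (univ : Finset (Fin ℓ))) (n := t - 1)
      (fun x _ => Finset.mem_univ _) ?_
    · obtain ⟨y, -, hy⟩ := h
      exact ⟨y, hy⟩
    · rw [List.toFinset_card_of_nodup hnd, hlen, Finset.card_univ, Fintype.card_fin]
      omega
  obtain ⟨i, hi⟩ := hfib
  obtain ⟨T, hTsub, hTcard⟩ := Finset.exists_subset_card_eq
    (show t ≤ (l.toFinset.filter (fun x => d x = i)).card by omega)
  refine ⟨i, T, hTcard, ?_⟩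
  intro x hx y hy hxy
  have hx' := hTsub hx
  have hy' := hTsub hy
  rw [Finset.mem_filter, List.mem_toFinset] at hx' hy'
  rcases sawin_pairwise_or hpw hx'.1 hy'.1 hxy with h | h
  · rw [h, hx'.2]
  · rw [Sym2.eq_swap, h, hy'.2]

/-- The `ℓ`-color Ramsey number `r(t; ℓ)`: least `n` such that every `ℓ`-coloring of
the edges of `K_n` contains a monochromatic `K_t`. -/
noncomputable def ramsey (t ℓ : ℕ) : ℕ :=
  sInf {n | ∀ c : Sym2 (Fin n) → Fin ℓ, ∃ i : Fin ℓ, ∃ S : Finset (Fin n),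
    S.card = t ∧ ∀ x ∈ S, ∀ y ∈ S, x ≠ y → c s(x, y) = i}

/-- `c_{r,t}`: the infimum over `K_t`-free graphs `G` (on a finite nonempty vertex set,
wlog `Fin n`) of the probability that `r` i.i.d. uniform vertices form an independent set. -/
noncomputable def cval (r t : ℕ) : ℝ :=
  sInf {x : ℝ | ∃ n : ℕ, 0 < n ∧ ∃ G : SimpleGraph (Fin n), G.CliqueFree t ∧
    x = (Nat.card {f : Fin r → Fin n // ∀ i j, ¬ G.Adj (f i) (f j)} : ℝ) / (n : ℝ) ^ r}

/-- Sawin's lemma: `r(t; ℓ) ≥ c_{t,t}^{-(ℓ-2)/t} · 2^{(t-1)/2}`. -/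
theorem sawin_lemma (ℓ t : ℕ) (hℓ : 3 ≤ ℓ) (ht : 3 ≤ t) :
    (ramsey t ℓ : ℝ) ≥ cval t t ^ (-(((ℓ : ℝ) - 2) / t)) * (2 : ℝ) ^ (((t : ℝ) - 1) / 2) := by
  classical
  have hSne : Set.Nonempty {n | ∀ c : Sym2 (Fin n) → Fin ℓ, ∃ i : Fin ℓ,
      ∃ S : Finset (Fin n), S.card = t ∧ ∀ x ∈ S, ∀ y ∈ S, x ≠ y → c s(x, y) = i} :=
    ⟨ℓ ^ (ℓ * (t - 1) + 1), sawin_ramsey_exists ℓ t hℓ ht⟩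
  have hmem : ∀ c : Sym2 (Fin (ramsey t ℓ)) → Fin ℓ, ∃ i : Fin ℓ,
      ∃ S : Finset (Fin (ramsey t ℓ)), S.card = t ∧
        ∀ x ∈ S, ∀ y ∈ S, x ≠ y → c s(x, y) = i :=
    Nat.sInf_mem hSne
  set r := ramsey t ℓ with hrdef
  have h2t : 2 ≤ t := by omega
  have h2l : 2 ≤ ℓ := by omega
  have htne : t ≠ 0 := by omega
  have htpos : 0 < t := by omega
  have hbot := sawin_key (n := r) (m := 1) hℓ ht one_pos (⊥ : SimpleGraph (Fin 1))
    (SimpleGraph.cliqueFree_bot h2t) hmem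
  have hr0 : 0 < r := by
    rcases Nat.eq_zero_or_pos r with h0 | h
    · rw [h0] at hbot
      have hzt : (0 : ℕ) ^ t = 0 := zero_pow htne
      rw [hzt, zero_mul] at hbot
      exact absurd hbot (Nat.not_lt_zero _)
    · exact h
  have hrR : (0 : ℝ) < (r : ℝ) := by exact_mod_cast hr0
  have htR : (0 : ℝ) < (t : ℝ) := by exact_mod_cast htpos
  have hlR : (0 : ℝ) < (ℓ : ℝ) - 2 := by
    have : (3 : ℝ) ≤ (ℓ : ℝ) := by exact_mod_cast hℓ
    linarith
  set C := t.choose 2 with hCdef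
  set D : ℝ := (2 : ℝ) ^ C / (r : ℝ) ^ t with hDdef
  have hDpos : 0 < D := by positivity
  set β : ℝ := D ^ ((1 : ℝ) / ((ℓ : ℝ) - 2)) with hβdef
  have hβpos : 0 < β := Real.rpow_pos_of_pos hDpos _
  -- every element of the cval set is at least β
  have hx : ∀ x ∈ {x : ℝ | ∃ n : ℕ, 0 < n ∧ ∃ G : SimpleGraph (Fin n), G.CliqueFree t ∧
      x = (Nat.card {f : Fin t → Fin n // ∀ i j, ¬ G.Adj (f i) (f j)} : ℝ) / (n : ℝ) ^ t},
      β ≤ x := by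
    rintro x ⟨mm, hmm, G, hG, rfl⟩
    have hkey := sawin_key (n := r) hℓ ht hmm G hG hmem
    set I := Nat.card {f : Fin t → Fin mm // ∀ i j, ¬ G.Adj (f i) (f j)} with hIdef
    have hmmR : (0 : ℝ) < (mm : ℝ) := by exact_mod_cast hmm
    have hkeyR : (2 : ℝ) ^ C * (mm : ℝ) ^ ((ℓ - 2) * t) ≤ (r : ℝ) ^ t * (I : ℝ) ^ (ℓ - 2) := by
      exact_mod_cast hkey.le
    have hxnn : (0 : ℝ) ≤ (I : ℝ) / (mm : ℝ) ^ t := by positivity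
    have hxpow : D ≤ ((I : ℝ) / (mm : ℝ) ^ t) ^ (ℓ - 2 : ℕ) := by
      rw [hDdef, div_pow, div_le_div_iff₀ (by positivity) (by positivity)]
      calc (2 : ℝ) ^ C * ((mm : ℝ) ^ t) ^ (ℓ - 2)
          = (2 : ℝ) ^ C * (mm : ℝ) ^ ((ℓ - 2) * t) := by
            rw [← pow_mul, mul_comm t (ℓ - 2)]
        _ ≤ (r : ℝ) ^ t * (I : ℝ) ^ (ℓ - 2) := hkeyR
        _ = (I : ℝ) ^ (ℓ - 2) * (r : ℝ) ^ t := by ring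
    have hcast : ((ℓ - 2 : ℕ) : ℝ) = (ℓ : ℝ) - 2 := by
      push_cast [Nat.cast_sub h2l]
      ring
    calc β ≤ (((I : ℝ) / (mm : ℝ) ^ t) ^ (ℓ - 2 : ℕ)) ^ ((1 : ℝ) / ((ℓ : ℝ) - 2)) := by
          rw [hβdef]
          exact Real.rpow_le_rpow (le_of_lt hDpos) hxpow (by positivity)
      _ = (I : ℝ) / (mm : ℝ) ^ t := by
          rw [← Real.rpow_natCast ((I : ℝ) / (mm : ℝ) ^ t) (ℓ - 2), hcast,
            ← Real.rpow_mul hxnn, mul_one_div_cancel (ne_of_gt hlR), Real.rpow_one]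
  have hPne : Set.Nonempty {x : ℝ | ∃ n : ℕ, 0 < n ∧ ∃ G : SimpleGraph (Fin n),
      G.CliqueFree t ∧
      x = (Nat.card {f : Fin t → Fin n // ∀ i j, ¬ G.Adj (f i) (f j)} : ℝ) / (n : ℝ) ^ t} :=
    ⟨_, 1, one_pos, ⊥, SimpleGraph.cliqueFree_bot h2t, rfl⟩
  have hcβ : β ≤ cval t t := le_csInf hPne hx
  have hexp : -(((ℓ : ℝ) - 2) / t) ≤ 0 :=
    neg_nonpos.mpr (le_of_lt (div_pos hlR htR))
  have hmono : cval t t ^ (-(((ℓ : ℝ) - 2) / t)) ≤ β ^ (-(((ℓ : ℝ) - 2) / t)) :=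
    Real.rpow_le_rpow_of_nonpos hβpos hcβ hexp
  have hCR : (C : ℝ) = (t : ℝ) * ((t : ℝ) - 1) / 2 := by
    rw [hCdef]
    exact Nat.cast_choose_two (K := ℝ) t
  have hcomp : β ^ (-(((ℓ : ℝ) - 2) / t)) * (2 : ℝ) ^ (((t : ℝ) - 1) / 2) = (r : ℝ) := by
    have hab : ((1 : ℝ) / ((ℓ : ℝ) - 2)) * (-(((ℓ : ℝ) - 2) / t)) = -(1 / (t : ℝ)) := by
      field_simp
    have h1 : β ^ (-(((ℓ : ℝ) - 2) / t)) = D ^ (-(1 / (t : ℝ))) := by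
      rw [hβdef, ← Real.rpow_mul (le_of_lt hDpos), hab]
    have h2 : D ^ ((1 : ℝ) / (t : ℝ)) = (2 : ℝ) ^ (((t : ℝ) - 1) / 2) / (r : ℝ) := by
      rw [hDdef, Real.div_rpow (by positivity) (by positivity)]
      congr 1
      · rw [← Real.rpow_natCast (2 : ℝ) C, ← Real.rpow_mul (by norm_num)]
        congr 1
        rw [hCR]
        field_simp
      · rw [← Real.rpow_natCast (r : ℝ) t, ← Real.rpow_mul (le_of_lt hrR),
          mul_one_div_cancel (ne_of_gt htR), Real.rpow_one]
    have h3 : D ^ (-(1 / (t : ℝ))) = (r : ℝ) / (2 : ℝ) ^ (((t : ℝ) - 1) / 2) := by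
      rw [Real.rpow_neg (le_of_lt hDpos), h2, inv_div]
    rw [h1, h3]
    field_simp
  calc cval t t ^ (-(((ℓ : ℝ) - 2) / t)) * (2 : ℝ) ^ (((t : ℝ) - 1) / 2)
      ≤ β ^ (-(((ℓ : ℝ) - 2) / t)) * (2 : ℝ) ^ (((t : ℝ) - 1) / 2) := by
        apply mul_le_mul_of_nonneg_right hmono
        positivity
    _ = (r : ℝ) := hcomp
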